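/- Upper bound for power connectives with exponent α ≥ 1: Fix a real number α ≥ 1 and ε ∈ (0,1), and let H be a real inner product space. Suppose x_1,…,x_n and y_1,…,y_n are vectors in H with ‖x_i‖ ≤ 1 and ‖y_i‖ ≤ 1, such that (max(⟪x_i,y_j⟫,0))^α − (max(⟪x_j,y_i⟫,0))^α ≥ ε for all 1 ≤ i < j ≤ n. Then log n ≤ α·π/ε + 1. -/

import Mathlib

open RealInnerProductSpace Real Finset


lemma aux_int_cos (m : ℤ) (hm : m ≠ 0) :
    ∫ t in (0:ℝ)..(2*π), t * Real.cos (m * t) = 0 := by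
  have hm' : (m:ℝ) ≠ 0 := Int.cast_ne_zero.mpr hm
  have key : ∀ t ∈ Set.uIcc (0:ℝ) (2*π),
      HasDerivAt (fun t : ℝ => t * Real.sin (m*t)/m + Real.cos (m*t)/(m:ℝ)^2)
        (t * Real.cos (m*t)) t := by
    intro t _
    have h1 : HasDerivAt (fun t : ℝ => (m:ℝ)*t) m t := by
      simpa using (hasDerivAt_id t).const_mul (m:ℝ)
    have hs : HasDerivAt (fun t : ℝ => Real.sin (m*t)) (Real.cos (m*t)*m) t :=
      (Real.hasDerivAt_sin _).comp t h1
    have hc : HasDerivAt (fun t : ℝ => Real.cos (m*t)) (-Real.sin (m*t)*m) t :=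
      (Real.hasDerivAt_cos _).comp t h1
    have := (((hasDerivAt_id' t).mul hs).div_const (m:ℝ)).add (hc.div_const ((m:ℝ)^2))
    refine this.congr_deriv ?_
    field_simp
    ring
  rw [intervalIntegral.integral_eq_sub_of_hasDerivAt key
      ((Continuous.intervalIntegrable (by fun_prop) _ _))]
  have h2 : Real.sin ((m:ℝ)*(2*π)) = 0 := by
    have : (m:ℝ)*(2*π) = ((2*m : ℤ):ℝ) * π := by push_cast; ring
    rw [this, Real.sin_int_mul_pi]
  have h3 : Real.cos ((m:ℝ)*(2*π)) = 1 := Real.cos_int_mul_two_pi m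
  simp [h2, h3]

lemma aux_int_sin (m : ℤ) (hm : m ≠ 0) :
    ∫ t in (0:ℝ)..(2*π), t * Real.sin (m * t) = -(2*π)/m := by
  have hm' : (m:ℝ) ≠ 0 := Int.cast_ne_zero.mpr hm
  have key : ∀ t ∈ Set.uIcc (0:ℝ) (2*π),
      HasDerivAt (fun t : ℝ => -(t * Real.cos (m*t))/m + Real.sin (m*t)/(m:ℝ)^2)
        (t * Real.sin (m*t)) t := by
    intro t _
    have h1 : HasDerivAt (fun t : ℝ => (m:ℝ)*t) m t := by
      simpa using (hasDerivAt_id t).const_mul (m:ℝ)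
    have hs : HasDerivAt (fun t : ℝ => Real.sin (m*t)) (Real.cos (m*t)*m) t :=
      (Real.hasDerivAt_sin _).comp t h1
    have hc : HasDerivAt (fun t : ℝ => Real.cos (m*t)) (-Real.sin (m*t)*m) t :=
      (Real.hasDerivAt_cos _).comp t h1
    have := ((((hasDerivAt_id' t).mul hc).neg).div_const (m:ℝ)).add (hs.div_const ((m:ℝ)^2))
    refine this.congr_deriv ?_
    field_simp
    ring
  rw [intervalIntegral.integral_eq_sub_of_hasDerivAt key
      ((Continuous.intervalIntegrable (by fun_prop) _ _))]
  have h2 : Real.sin ((m:ℝ)*(2*π)) = 0 := by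
    have : (m:ℝ)*(2*π) = ((2*m : ℤ):ℝ) * π := by push_cast; ring
    rw [this, Real.sin_int_mul_pi]
  have h3 : Real.cos ((m:ℝ)*(2*π)) = 1 := Real.cos_int_mul_two_pi m
  field_simp [h2, h3]
  rw [show 2*π*(m:ℝ) = (m:ℝ)*(2*π) by ring, h2, h3]
  simp only [mul_zero, Real.cos_zero, Real.sin_zero]
  ring

example : ∫ t in (0:ℝ)..(2*π), t = 2*π^2 := by
  rw [integral_id]; ring


lemma aux_log_harmonic (N : ℕ) : Real.log (N+1) ≤ ∑ m ∈ range N, 1/((m:ℝ)+1) := by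
  induction N with
  | zero => simp
  | succ N ih =>
    rw [sum_range_succ]
    have h1 : Real.log ((N:ℝ)+1+1) - Real.log ((N:ℝ)+1) ≤ 1/((N:ℝ)+1) := by
      rw [← Real.log_div (by positivity) (by positivity)]
      have := Real.log_le_sub_one_of_pos (x := ((N:ℝ)+1+1)/((N:ℝ)+1)) (by positivity)
      have h2 : ((N:ℝ)+1+1)/((N:ℝ)+1) - 1 = 1/((N:ℝ)+1) := by field_simp; ring
      linarith
    push_cast
    linarith

lemma aux_sum_log (n : ℕ) : (n:ℝ) * Real.log n - n ≤ ∑ k ∈ range n, Real.log ((k:ℝ)+1) := by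
  induction n with
  | zero => simp
  | succ n ih =>
    rw [sum_range_succ]
    rcases Nat.eq_zero_or_pos n with rfl | hn
    · simp
    have hn' : (0:ℝ) < n := by exact_mod_cast hn
    have h1 : Real.log ((n:ℝ)+1) - Real.log n ≤ 1/(n:ℝ) := by
      rw [← Real.log_div (by positivity) (by positivity)]
      have := Real.log_le_sub_one_of_pos (x := ((n:ℝ)+1)/(n:ℝ)) (by positivity)
      have h2 : ((n:ℝ)+1)/(n:ℝ) - 1 = 1/(n:ℝ) := by field_simp; ring
      linarith
    have h3 : (n:ℝ) * (Real.log ((n:ℝ)+1) - Real.log n) ≤ 1 := by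
      calc (n:ℝ) * (Real.log ((n:ℝ)+1) - Real.log n) ≤ (n:ℝ) * (1/(n:ℝ)) := by
            apply mul_le_mul_of_nonneg_left h1 (le_of_lt hn')
        _ = 1 := by field_simp
    push_cast
    nlinarith [ih]

lemma aux_harmonic_double (n : ℕ) :
    (n:ℝ) * Real.log n - n ≤ ∑ k ∈ range n, ∑ j ∈ range k, 1/((k:ℝ) - j) := by
  refine le_trans (aux_sum_log n) (sum_le_sum ?_)
  intro k _
  have h1 : ∑ j ∈ range k, 1/((k:ℝ) - j) = ∑ m ∈ range k, 1/((m:ℝ)+1) := by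
    rw [← Finset.sum_range_reflect]
    apply Finset.sum_congr rfl
    intro j hj
    have hj' : j < k := mem_range.mp hj
    congr 1
    have : (↑(k - 1 - j) : ℝ) = (k:ℝ) - 1 - j := by
      have : k - 1 - j = k - (1 + j) := by omega
      rw [this]
      push_cast [Nat.cast_sub (by omega : 1 + j ≤ k)]
      ring
    rw [this]; ring
  rw [h1]
  exact aux_log_harmonic k


lemma aux_rpow_lipschitz {α a b ε : ℝ} (hα : 1 ≤ α) (ha : a ≤ 1) (hb : b ≤ 1)
    (hε : 0 < ε) (h : ε ≤ max b 0 ^ α - max a 0 ^ α) : ε ≤ α * (b - a) := by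
  set A := max a 0 with hAdef
  set B := max b 0 with hBdef
  have hA0 : 0 ≤ A := le_max_right _ _
  have hB0 : 0 ≤ B := le_max_right _ _
  have hA1 : A ≤ 1 := max_le ha zero_le_one
  have hB1 : B ≤ 1 := max_le hb zero_le_one
  have hα0 : (0:ℝ) < α := lt_of_lt_of_le one_pos hα
  have hAB : A < B := by
    by_contra hc
    push_neg at hc
    have := Real.rpow_le_rpow hB0 hc (le_of_lt hα0)
    linarith
  have hder : ∀ t ∈ Set.Icc (0:ℝ) 1,
      HasDerivWithinAt (fun s : ℝ => s ^ α) ((fun t : ℝ => α * t ^ (α-1)) t) (Set.Icc 0 1) t :=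
    fun t _ => (Real.hasDerivAt_rpow_const (Or.inr hα)).hasDerivWithinAt
  have hbound : ∀ t ∈ Set.Icc (0:ℝ) 1, ‖(fun t : ℝ => α * t ^ (α-1)) t‖ ≤ α := by
    intro t ht
    have h1 : t ^ (α-1) ≤ 1 := Real.rpow_le_one ht.1 ht.2 (by linarith)
    have h2 : 0 ≤ t ^ (α-1) := Real.rpow_nonneg ht.1 _
    rw [Real.norm_eq_abs, abs_mul, abs_of_pos hα0, abs_of_nonneg h2]
    nlinarith
  have key := Convex.norm_image_sub_le_of_norm_hasDerivWithin_le hder hbound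
    (convex_Icc 0 1) (Set.mem_Icc.mpr ⟨hA0, hA1⟩) (Set.mem_Icc.mpr ⟨hB0, hB1⟩)
  rw [Real.norm_eq_abs, Real.norm_eq_abs] at key
  have h3 : B ^ α - A ^ α ≤ α * (B - A) := by
    have := le_abs_self (B ^ α - A ^ α)
    have habs : |B - A| = B - A := abs_of_pos (by linarith)
    rw [habs] at key
    linarith
  have hBb : B = b := by
    have hb0 : 0 < b := by
      by_contra hc
      push_neg at hc
      have : B = 0 := max_eq_right hc
      linarith
    exact max_eq_left (le_of_lt hb0)
  have hAa : a ≤ A := le_max_left _ _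
  have h4 : B - A ≤ b - a := by rw [hBb]; linarith
  nlinarith

lemma aux_pair {H : Type*} [NormedAddCommGroup H] [InnerProductSpace ℝ H]
    (a b a' b' : H) (u v : ℝ) :
    ⟪Real.cos u • a + Real.sin u • b, Real.cos v • a' + Real.sin v • b'⟫
    + ⟪Real.sin u • a - Real.cos u • b, Real.sin v • a' - Real.cos v • b'⟫
    = Real.cos (v - u) * (⟪a, a'⟫ + ⟪b, b'⟫) + Real.sin (v - u) * (⟪a, b'⟫ - ⟪b, a'⟫) := by
  simp only [inner_add_left, inner_add_right, inner_sub_left, inner_sub_right,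
    real_inner_smul_left, real_inner_smul_right, Real.cos_sub, Real.sin_sub]
  ring

theorem aux_core {H : Type*} [NormedAddCommGroup H] [InnerProductSpace ℝ H]
    (δ : ℝ) (hδ : 0 < δ) (n : ℕ) (x y : Fin n → H)
    (hx : ∀ i, ‖x i‖ ≤ 1) (hy : ∀ i, ‖y i‖ ≤ 1)
    (hB : ∀ j k : Fin n, j < k → δ ≤ ⟪x j, y k⟫ - ⟪x k, y j⟫) :
    Real.log n ≤ π / δ + 1 := by
  rcases Nat.eq_zero_or_pos n with rfl | hn
  · simp only [Nat.cast_zero, Real.log_zero]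
    positivity
  classical
  set A : Fin n → Fin n → ℝ := fun j k => ⟪x j, x k⟫ + ⟪y j, y k⟫ with hAdef
  set B : Fin n → Fin n → ℝ := fun j k => ⟪x j, y k⟫ - ⟪x k, y j⟫ with hBdef
  set q : ℝ → ℝ := fun t => ∑ j : Fin n, ∑ k : Fin n,
      (Real.cos ((k.1:ℝ)*t - (j.1:ℝ)*t) * A j k
       + Real.sin ((k.1:ℝ)*t - (j.1:ℝ)*t) * B j k) with hqdef
  -- pointwise identity with sum of two squared norms
  have hq : ∀ t : ℝ, q t
      = ‖∑ k : Fin n, (Real.cos ((k.1:ℝ)*t) • x k + Real.sin ((k.1:ℝ)*t) • y k)‖^2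
      + ‖∑ k : Fin n, (Real.sin ((k.1:ℝ)*t) • x k - Real.cos ((k.1:ℝ)*t) • y k)‖^2 := by
    intro t
    rw [← real_inner_self_eq_norm_sq, ← real_inner_self_eq_norm_sq, sum_inner, sum_inner]
    simp only [inner_sum]
    rw [hqdef]
    simp only
    rw [← Finset.sum_add_distrib]
    refine Finset.sum_congr rfl fun j _ => ?_
    rw [← Finset.sum_add_distrib]
    refine Finset.sum_congr rfl fun k _ => ?_
    rw [aux_pair (x j) (y j) (x k) (y k) ((j.1:ℝ)*t) ((k.1:ℝ)*t),
        real_inner_comm (x k) (y j)]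
  -- nonnegativity of the weighted integral
  have h0 : 0 ≤ ∫ t in (0:ℝ)..(2*π), t * q t := by
    apply intervalIntegral.integral_nonneg (by positivity)
    intro u hu
    have hq0 : 0 ≤ q u := by rw [hq u]; positivity
    exact mul_nonneg hu.1 hq0
  -- value of the integral
  have hval : (∫ t in (0:ℝ)..(2*π), t * q t)
      = ∑ j : Fin n, ∑ k : Fin n,
        (if j = k then 2*π^2 * A j k else (-(2*π)/((k.1:ℝ) - (j.1:ℝ))) * B j k) := by
    have h1 : ∀ t : ℝ, t * q t = ∑ j : Fin n, ∑ k : Fin n,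
        (A j k * (t * Real.cos ((k.1:ℝ)*t - (j.1:ℝ)*t))
         + B j k * (t * Real.sin ((k.1:ℝ)*t - (j.1:ℝ)*t))) := by
      intro t
      rw [hqdef]
      simp only
      rw [Finset.mul_sum]
      refine Finset.sum_congr rfl fun j _ => ?_
      rw [Finset.mul_sum]
      refine Finset.sum_congr rfl fun k _ => ?_
      ring
    simp only [h1]
    rw [intervalIntegral.integral_finset_sum
        (fun j _ => (Continuous.intervalIntegrable (by fun_prop) _ _))]
    refine Finset.sum_congr rfl fun j _ => ?_
    rw [intervalIntegral.integral_finset_sum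
        (fun k _ => (Continuous.intervalIntegrable (by fun_prop) _ _))]
    refine Finset.sum_congr rfl fun k _ => ?_
    rw [intervalIntegral.integral_add
        (Continuous.intervalIntegrable (by fun_prop) _ _)
        (Continuous.intervalIntegrable (by fun_prop) _ _),
      intervalIntegral.integral_const_mul, intervalIntegral.integral_const_mul]
    by_cases hjk : j = k
    · subst hjk
      rw [if_pos rfl]
      have e1 : ∀ t : ℝ, (j.1:ℝ)*t - (j.1:ℝ)*t = 0 := fun t => by ring
      simp only [e1, Real.cos_zero, Real.sin_zero, mul_one, mul_zero]
      rw [integral_id, intervalIntegral.integral_zero]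
      ring
    · have hvne : j.1 ≠ k.1 := fun h => hjk (Fin.ext h)
      have hmz : ((k.1:ℤ) - (j.1:ℤ)) ≠ 0 := sub_ne_zero.mpr (by exact_mod_cast Ne.symm hvne)
      have hphase : ∀ t : ℝ, (k.1:ℝ)*t - (j.1:ℝ)*t = ((((k.1:ℤ) - (j.1:ℤ)):ℤ):ℝ)*t := by
        intro t; push_cast; ring
      simp only [hphase]
      rw [aux_int_cos _ hmz, aux_int_sin _ hmz, if_neg hjk]
      push_cast
      ring
  -- split the double sum
  set T : ℝ := ∑ j : Fin n, ∑ k : Fin n,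
      (if j < k then B j k / ((k.1:ℝ) - (j.1:ℝ)) else 0) with hTdef
  set SA : ℝ := ∑ j : Fin n, A j j with hSAdef
  have hsplit : (∑ j : Fin n, ∑ k : Fin n,
        (if j = k then 2*π^2 * A j k else (-(2*π)/((k.1:ℝ) - (j.1:ℝ))) * B j k))
      = 2*π^2 * SA - 4*π*T := by
    have point : ∀ j k : Fin n,
        (if j = k then 2*π^2 * A j k else (-(2*π)/((k.1:ℝ) - (j.1:ℝ))) * B j k)
        = (if j = k then 2*π^2 * A j k else 0)
          + ((if j < k then (-(2*π)/((k.1:ℝ) - (j.1:ℝ))) * B j k else 0)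
             + (if k < j then (-(2*π)/((k.1:ℝ) - (j.1:ℝ))) * B j k else 0)) := by
      intro j k
      rcases lt_trichotomy j k with h | h | h
      · rw [if_neg (ne_of_lt h), if_neg (ne_of_lt h), if_pos h, if_neg (asymm h)]
        ring
      · subst h
        simp
      · rw [if_neg (Ne.symm (ne_of_lt h)), if_neg (Ne.symm (ne_of_lt h)),
          if_neg (asymm h), if_pos h]
        ring
    simp only [point, Finset.sum_add_distrib]
    have hS1 : (∑ j : Fin n, ∑ k : Fin n, (if j = k then 2*π^2 * A j k else 0))
        = 2*π^2 * SA := by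
      rw [hSAdef, Finset.mul_sum]
      refine Finset.sum_congr rfl fun j _ => ?_
      simp [Finset.sum_ite_eq]
    have hS3 : (∑ j : Fin n, ∑ k : Fin n,
          (if k < j then (-(2*π)/((k.1:ℝ) - (j.1:ℝ))) * B j k else 0))
        = ∑ j : Fin n, ∑ k : Fin n,
          (if j < k then (-(2*π)/((k.1:ℝ) - (j.1:ℝ))) * B j k else 0) := by
      rw [Finset.sum_comm]
      refine Finset.sum_congr rfl fun j _ => Finset.sum_congr rfl fun k _ => ?_
      by_cases h : j < k
      · rw [if_pos h, if_pos h, hBdef]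
        simp only
        rw [show (j.1:ℝ) - (k.1:ℝ) = -((k.1:ℝ) - (j.1:ℝ)) by ring, div_neg]
        ring
      · rw [if_neg h, if_neg h]
    have hS2 : (∑ j : Fin n, ∑ k : Fin n,
          (if j < k then (-(2*π)/((k.1:ℝ) - (j.1:ℝ))) * B j k else 0))
        = -(2*π) * T := by
      rw [hTdef, Finset.mul_sum]
      refine Finset.sum_congr rfl fun j _ => ?_
      rw [Finset.mul_sum]
      refine Finset.sum_congr rfl fun k _ => ?_
      by_cases h : j < k
      · rw [if_pos h, if_pos h]
        ring
      · rw [if_neg h, if_neg h]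
        ring
    rw [hS1, hS3, hS2]
    ring
  rw [hval, hsplit] at h0
  -- lower bound for T
  have hd : ∀ j k : Fin n, j < k → (0:ℝ) < (k.1:ℝ) - (j.1:ℝ) := by
    intro j k h
    have : j.1 < k.1 := h
    have : (j.1:ℝ) < (k.1:ℝ) := by exact_mod_cast this
    linarith
  have hT : δ * (∑ j : Fin n, ∑ k : Fin n,
      (if j < k then 1/((k.1:ℝ) - (j.1:ℝ)) else 0)) ≤ T := by
    rw [hTdef, Finset.mul_sum]
    refine Finset.sum_le_sum fun j _ => ?_
    rw [Finset.mul_sum]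
    refine Finset.sum_le_sum fun k _ => ?_
    by_cases h : j < k
    · rw [if_pos h, if_pos h, mul_one_div]
      exact (div_le_div_iff_of_pos_right (hd j k h)).mpr (hB j k h)
    · rw [if_neg h, if_neg h, mul_zero]
  -- harmonic lower bound
  have hHS : (n:ℝ) * Real.log n - n ≤ ∑ j : Fin n, ∑ k : Fin n,
      (if j < k then 1/((k.1:ℝ) - (j.1:ℝ)) else 0) := by
    rw [Finset.sum_comm]
    have hin : ∀ k : Fin n, (∑ j : Fin n, (if j < k then 1/((k.1:ℝ) - (j.1:ℝ)) else 0))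
        = ∑ j ∈ range k.1, 1/((k.1:ℝ) - (j:ℝ)) := by
      intro k
      have e1 : (∑ j : Fin n, (if j < k then 1/((k.1:ℝ) - (j.1:ℝ)) else 0))
          = ∑ j ∈ range n, (if j < k.1 then 1/((k.1:ℝ) - (j:ℝ)) else 0) := by
        rw [← Fin.sum_univ_eq_sum_range (fun j => if j < k.1 then 1/((k.1:ℝ) - (j:ℝ)) else 0) n]
        refine Finset.sum_congr rfl fun j _ => ?_
        rfl
      rw [e1]
      rw [← Finset.sum_subset (Finset.range_subset_range.mpr k.2.le)]
      · exact Finset.sum_congr rfl fun j hj => if_pos (mem_range.mp hj)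
      · intro j _ hj
        exact if_neg (by simpa using hj)
    simp only [hin]
    rw [Fin.sum_univ_eq_sum_range (fun kv => ∑ j ∈ range kv, 1/((kv:ℝ) - (j:ℝ))) n]
    exact aux_harmonic_double n
  -- diagonal bound
  have hSA : SA ≤ 2*n := by
    rw [hSAdef]
    calc (∑ j : Fin n, A j j) ≤ ∑ _j : Fin n, (2:ℝ) := by
          refine Finset.sum_le_sum fun j _ => ?_
          rw [hAdef]
          simp only
          rw [real_inner_self_eq_norm_sq, real_inner_self_eq_norm_sq]
          have h1 : ‖x j‖^2 ≤ 1 := pow_le_one₀ (norm_nonneg _) (hx j) |>.trans le_rfl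
          have h2 : ‖y j‖^2 ≤ 1 := pow_le_one₀ (norm_nonneg _) (hy j) |>.trans le_rfl
          linarith
      _ = 2*n := by simp [mul_comm]
  -- final arithmetic
  have hn' : (0:ℝ) < n := by exact_mod_cast hn
  have hπ := Real.pi_pos
  have c1 : δ * ((n:ℝ) * Real.log n - n) ≤ T :=
    le_trans (mul_le_mul_of_nonneg_left hHS hδ.le) hT
  have c2 : 4*π*T ≤ 2*π^2*SA := by linarith
  have c3 : 2*π^2*SA ≤ 4*π^2*n := by nlinarith
  have c4 : δ * ((n:ℝ) * Real.log n - n) ≤ π * n := by nlinarith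
  have c5 : δ * Real.log n ≤ π + δ := by
    have : (δ * Real.log n) * n ≤ (π + δ) * n := by nlinarith
    exact le_of_mul_le_mul_right this hn'
  rw [show π/δ + 1 = (π + δ)/δ by field_simp]
  rw [le_div_iff₀ hδ]
  nlinarith

/-- Upper bound for power connectives `(⟪x,y⟫₊)^α` with `α ≥ 1`. -/
theorem power_upper_bound_alpha_ge_one
    {H : Type*} [NormedAddCommGroup H] [InnerProductSpace ℝ H]
    (α : ℝ) (hα : 1 ≤ α)
    (ε : ℝ) (hε : ε ∈ Set.Ioo (0 : ℝ) 1) (n : ℕ)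
    (x y : Fin n → H)
    (hx : ∀ i, ‖x i‖ ≤ 1) (hy : ∀ i, ‖y i‖ ≤ 1)
    (hhg : ∀ i j : Fin n, i < j →
        ε ≤ (max ⟪x i, y j⟫ 0) ^ α - (max ⟪x j, y i⟫ 0) ^ α) :
    Real.log n ≤ α * π / ε + 1 := by
  obtain ⟨hε0, hε1⟩ := hε
  have hα0 : (0:ℝ) < α := lt_of_lt_of_le one_pos hα
  have hδ : 0 < ε / α := div_pos hε0 hα0
  have hip : ∀ (u v : H), ‖u‖ ≤ 1 → ‖v‖ ≤ 1 → ⟪u, v⟫ ≤ 1 := by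
    intro u v hu hv
    refine le_trans (real_inner_le_norm u v) ?_
    nlinarith [norm_nonneg u, norm_nonneg v]
  have hB : ∀ j k : Fin n, j < k → ε/α ≤ ⟪x j, y k⟫ - ⟪x k, y j⟫ := by
    intro j k h
    have h1 : ⟪x j, y k⟫ ≤ 1 := hip _ _ (hx j) (hy k)
    have h2 : ⟪x k, y j⟫ ≤ 1 := hip _ _ (hx k) (hy j)
    have h3 := aux_rpow_lipschitz hα h2 h1 hε0 (hhg j k h)
    rw [div_le_iff₀ hα0]
    linarith [h3]
  have hcore := aux_core (ε/α) hδ n x y hx hy hB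
  have heq : π / (ε/α) = α * π / ε := by
    field_simp
  rw [heq] at hcore
  exact hcore
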